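/- Let H ∈ C^{n×n} be upper Hessenberg, 1 ≤ r ≤ n-1, and let H_- and H_+ denote its upper-left r×r and lower-right (n-r)×(n-r) corner blocks. If |H_{r+1,r}| ≤ ε', then Λ_{ε-ε'}(H_-) ∪ Λ_{ε-ε'}(H_+) ⊆ Λ_ε(H) for every ε > ε'. -/

import Mathlib

open Matrix

/-- Operator (ℓ²→ℓ²) norm of a complex matrix. -/
noncomputable def opNorm {m : Type*} [Fintype m] [DecidableEq m] (M : Matrix m m ℂ) : ℝ :=
  ‖LinearMap.toContinuousLinearMap (Matrix.toEuclideanLin M)‖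

/-- ε-pseudospectrum of a matrix. -/
noncomputable def pseudospectrum {m : Type*} [Fintype m] [DecidableEq m] (ε : ℝ)
    (M : Matrix m m ℂ) : Set ℂ :=
  {z | ∃ E : Matrix m m ℂ, opNorm E ≤ ε ∧ z ∈ spectrum ℂ (M + E)}

lemma opNorm_nonneg {m : Type*} [Fintype m] [DecidableEq m] (M : Matrix m m ℂ) : 0 ≤ opNorm M :=
  norm_nonneg _

lemma le_opNorm {m : Type*} [Fintype m] [DecidableEq m] (M : Matrix m m ℂ)
    (x : EuclideanSpace ℂ m) : ‖Matrix.toEuclideanLin M x‖ ≤ opNorm M * ‖x‖ := by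
  have h := (LinearMap.toContinuousLinearMap (Matrix.toEuclideanLin M)).le_opNorm x
  rwa [LinearMap.coe_toContinuousLinearMap'] at h

lemma opNorm_le_bound {m : Type*} [Fintype m] [DecidableEq m] (M : Matrix m m ℂ) {K : ℝ}
    (hK : 0 ≤ K) (h : ∀ x : EuclideanSpace ℂ m, ‖Matrix.toEuclideanLin M x‖ ≤ K * ‖x‖) :
    opNorm M ≤ K :=
  ContinuousLinearMap.opNorm_le_bound _ hK (by
    intro x
    rw [LinearMap.coe_toContinuousLinearMap']
    exact h x)

lemma opNorm_add_le {m : Type*} [Fintype m] [DecidableEq m] (A B : Matrix m m ℂ) :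
    opNorm (A + B) ≤ opNorm A + opNorm B := by
  unfold opNorm; rw [map_add, map_add]; exact norm_add_le _ _

lemma opNorm_zero {m : Type*} [Fintype m] [DecidableEq m] :
    opNorm (0 : Matrix m m ℂ) = 0 := by
  unfold opNorm; rw [map_zero, map_zero, norm_zero]

lemma opNorm_neg {m : Type*} [Fintype m] [DecidableEq m] (A : Matrix m m ℂ) :
    opNorm (-A) = opNorm A := by
  unfold opNorm; rw [map_neg, map_neg, norm_neg]

lemma opNorm_embed_le {m p : Type*} [Fintype m] [DecidableEq m] [Fintype p] [DecidableEq p]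
    (E : Matrix p p ℂ) (F : Matrix m m ℂ) (u w : p → m)
    (hu : Function.Injective u) (hw : Function.Injective w)
    (h1 : ∀ a b, F (u a) (w b) = E a b)
    (h2 : ∀ i j, j ∉ Set.range w → F i j = 0)
    (h3 : ∀ i j, i ∉ Set.range u → F i j = 0) :
    opNorm F ≤ opNorm E := by
  classical
  apply opNorm_le_bound _ (opNorm_nonneg E)
  intro x
  set x' : EuclideanSpace ℂ p := WithLp.toLp 2 (fun b => x (w b)) with hx'def
  have hcoordF : ∀ i : m, (Matrix.toEuclideanLin F x) i = ∑ j, F i j * x j := fun _ => rfl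
  have hcoordE : ∀ a : p, (Matrix.toEuclideanLin E x') a = ∑ b, E a b * x' b := fun _ => rfl
  have hx' : ‖x'‖ ≤ ‖x‖ := by
    rw [EuclideanSpace.norm_eq, EuclideanSpace.norm_eq]
    apply Real.sqrt_le_sqrt
    calc ∑ b, ‖x' b‖ ^ 2 = ∑ j ∈ Finset.univ.image w, ‖x j‖ ^ 2 := by
          rw [Finset.sum_image (fun a _ b _ h => hw h)]
      _ ≤ ∑ j, ‖x j‖ ^ 2 := Finset.sum_le_sum_of_subset_of_nonneg (Finset.subset_univ _)
          (fun j _ _ => by positivity)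
  have hFu : ∀ a : p, (∑ j, F (u a) j * x j) = ∑ b, E a b * x' b := by
    intro a
    calc ∑ j, F (u a) j * x j = ∑ j ∈ Finset.univ.image w, F (u a) j * x j := by
          symm
          apply Finset.sum_subset (Finset.subset_univ _)
          intro j _ hj
          have hjr : j ∉ Set.range w := by
            rintro ⟨b, rfl⟩
            exact hj (Finset.mem_image_of_mem w (Finset.mem_univ b))
          rw [h2 _ _ hjr, zero_mul]
      _ = ∑ b, F (u a) (w b) * x (w b) := Finset.sum_image (fun a _ b _ h => hw h)
      _ = ∑ b, E a b * x' b := by simp only [h1, hx'def, PiLp.toLp_apply]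
  have hnorm : ‖Matrix.toEuclideanLin F x‖ = ‖Matrix.toEuclideanLin E x'‖ := by
    rw [EuclideanSpace.norm_eq, EuclideanSpace.norm_eq]
    congr 1
    calc ∑ i, ‖(Matrix.toEuclideanLin F x) i‖ ^ 2
        = ∑ i ∈ Finset.univ.image u, ‖(Matrix.toEuclideanLin F x) i‖ ^ 2 := by
          symm
          apply Finset.sum_subset (Finset.subset_univ _)
          intro i _ hi
          have hir : i ∉ Set.range u := by
            rintro ⟨a, rfl⟩
            exact hi (Finset.mem_image_of_mem u (Finset.mem_univ a))
          have hz : (Matrix.toEuclideanLin F x) i = 0 := by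
            rw [hcoordF]
            exact Finset.sum_eq_zero fun j _ => by rw [h3 _ _ hir, zero_mul]
          simp [hz]
      _ = ∑ a, ‖(Matrix.toEuclideanLin F x) (u a)‖ ^ 2 :=
          Finset.sum_image (fun a _ b _ h => hu h)
      _ = ∑ a, ‖(Matrix.toEuclideanLin E x') a‖ ^ 2 := by
          refine Finset.sum_congr rfl fun a _ => ?_
          rw [hcoordF, hcoordE, hFu]
  rw [hnorm]
  exact le_trans (le_opNorm E x') (mul_le_mul_of_nonneg_left hx' (opNorm_nonneg E))

lemma opNorm_single_le {m : Type*} [Fintype m] [DecidableEq m] (i₀ j₀ : m) (c : ℂ) :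
    opNorm (Matrix.of fun i j => if i = i₀ ∧ j = j₀ then c else 0) ≤ ‖c‖ := by
  classical
  apply opNorm_le_bound _ (norm_nonneg c)
  intro x
  have hcoord : ∀ i, (Matrix.toEuclideanLin
      (Matrix.of fun i j => if i = i₀ ∧ j = j₀ then c else 0) x) i
      = if i = i₀ then c * x j₀ else 0 := by
    intro i
    show (∑ j, (if i = i₀ ∧ j = j₀ then c else 0) * x j) = _
    by_cases hi : i = i₀
    · simp [hi]
    · simp [hi]
  have hxj : ‖x j₀‖ ≤ ‖x‖ := by
    rw [EuclideanSpace.norm_eq]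
    have h1 : ‖x j₀‖ = Real.sqrt (‖x j₀‖ ^ 2) := by
      rw [Real.sqrt_sq (norm_nonneg _)]
    rw [h1]
    apply Real.sqrt_le_sqrt
    exact Finset.single_le_sum (f := fun j => ‖x j‖ ^ 2) (fun j _ => by positivity)
      (Finset.mem_univ j₀)
  rw [EuclideanSpace.norm_eq]
  have hsum : ∑ i, ‖(Matrix.toEuclideanLin
      (Matrix.of fun i j => if i = i₀ ∧ j = j₀ then c else 0) x) i‖ ^ 2
      = ‖c * x j₀‖ ^ 2 := by
    rw [Finset.sum_eq_single i₀]
    · rw [hcoord, if_pos rfl]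
    · intro i _ hi
      rw [hcoord, if_neg hi]
      simp
    · intro h; exact absurd (Finset.mem_univ i₀) h
  rw [hsum, Real.sqrt_sq (norm_nonneg _), norm_mul]
  exact mul_le_mul_of_nonneg_left hxj (norm_nonneg c)

lemma algebraMap_fromBlocks {m p : Type*} [Fintype m] [DecidableEq m] [Fintype p]
    [DecidableEq p] (z : ℂ) :
    algebraMap ℂ (Matrix (m ⊕ p) (m ⊕ p) ℂ) z =
      Matrix.fromBlocks (algebraMap ℂ (Matrix m m ℂ) z) 0 0 (algebraMap ℂ (Matrix p p ℂ) z) := by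
  rw [Algebra.algebraMap_eq_smul_one, Algebra.algebraMap_eq_smul_one,
    Algebra.algebraMap_eq_smul_one, ← Matrix.fromBlocks_one, Matrix.fromBlocks_smul,
    smul_zero, smul_zero]

lemma sub_fromBlocks {m p : Type*} [Fintype m] [DecidableEq m] [Fintype p] [DecidableEq p]
    (z : ℂ) (A : Matrix m m ℂ) (B : Matrix m p ℂ) (D : Matrix p p ℂ) :
    algebraMap ℂ (Matrix (m ⊕ p) (m ⊕ p) ℂ) z - Matrix.fromBlocks A B 0 D =
      Matrix.fromBlocks (algebraMap ℂ (Matrix m m ℂ) z - A) (-B) 0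
        (algebraMap ℂ (Matrix p p ℂ) z - D) := by
  rw [algebraMap_fromBlocks, sub_eq_add_neg, Matrix.fromBlocks_neg, Matrix.fromBlocks_add]
  simp [sub_eq_add_neg]

lemma spectrum_fromBlocks_left {m p : Type*} [Fintype m] [DecidableEq m] [Fintype p]
    [DecidableEq p] (A : Matrix m m ℂ) (B : Matrix m p ℂ) (D : Matrix p p ℂ) :
    spectrum ℂ A ⊆ spectrum ℂ (Matrix.fromBlocks A B 0 D) := by
  intro z hz
  rw [spectrum.mem_iff] at hz ⊢
  intro hU
  apply hz
  rw [Matrix.isUnit_iff_isUnit_det] at hU ⊢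
  rw [sub_fromBlocks, Matrix.det_fromBlocks_zero₂₁] at hU
  exact (IsUnit.mul_iff.mp hU).1

lemma spectrum_fromBlocks_right {m p : Type*} [Fintype m] [DecidableEq m] [Fintype p]
    [DecidableEq p] (A : Matrix m m ℂ) (B : Matrix m p ℂ) (D : Matrix p p ℂ) :
    spectrum ℂ D ⊆ spectrum ℂ (Matrix.fromBlocks A B 0 D) := by
  intro z hz
  rw [spectrum.mem_iff] at hz ⊢
  intro hU
  apply hz
  rw [Matrix.isUnit_iff_isUnit_det] at hU ⊢
  rw [sub_fromBlocks, Matrix.det_fromBlocks_zero₂₁] at hU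
  exact (IsUnit.mul_iff.mp hU).2

lemma spectrum_reindex {m p : Type*} [Fintype m] [DecidableEq m] [Fintype p] [DecidableEq p]
    (e : m ≃ p) (M : Matrix m m ℂ) :
    spectrum ℂ (Matrix.reindex e e M) = spectrum ℂ M := by
  have := AlgEquiv.spectrum_eq (Matrix.reindexAlgEquiv ℂ ℂ e) M
  rwa [Matrix.reindexAlgEquiv_apply] at this

lemma stmt15_aux (n r : ℕ) (hr₁ : 1 ≤ r) (hrlt : r < n)
    (H : Matrix (Fin n) (Fin n) ℂ)
    (hHess : ∀ i j : Fin n, (j : ℕ) + 1 < (i : ℕ) → H i j = 0)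
    (ε' ε : ℝ)
    (hcoupling : ‖H ⟨r, hrlt⟩ ⟨r - 1, by omega⟩‖ ≤ ε')
    (A : Matrix (Fin r) (Fin r) ℂ) (D : Matrix (Fin (n - r)) (Fin (n - r)) ℂ)
    (e : Fin r ⊕ Fin (n - r) ≃ Fin n)
    (he : e = finSumFinEquiv.trans (finCongr (by omega)))
    (z : ℂ)
    (hz : z ∈ spectrum ℂ (Matrix.fromBlocks A
       (H.submatrix (fun a => e (Sum.inl a)) (fun b => e (Sum.inr b))) 0 D))
    (hnorm : opNorm (A - H.submatrix (fun a => e (Sum.inl a)) (fun a => e (Sum.inl a)))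
      + opNorm (D - H.submatrix (fun a => e (Sum.inr a)) (fun a => e (Sum.inr a))) + ε' ≤ ε) :
    z ∈ pseudospectrum ε H := by
  classical
  have hel : ∀ a : Fin r, ((e (Sum.inl a) : Fin n) : ℕ) = a := by intro a; simp [he]
  have her : ∀ b : Fin (n - r), ((e (Sum.inr b) : Fin n) : ℕ) = r + b := by intro b; simp [he]
  set A₀ := H.submatrix (fun a => e (Sum.inl a)) (fun a => e (Sum.inl a)) with hA₀
  set D₀ := H.submatrix (fun a => e (Sum.inr a)) (fun a => e (Sum.inr a)) with hD₀
  set C₀ := H.submatrix (fun a => e (Sum.inr a)) (fun a => e (Sum.inl a)) with hC₀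
  set Hb := H.submatrix (fun a => e (Sum.inl a)) (fun b => e (Sum.inr b)) with hHb
  set M := Matrix.reindex e e (Matrix.fromBlocks A Hb 0 D) with hM
  refine ⟨M - H, ?_, ?_⟩
  · -- norm bound
    have hHdecomp : H = Matrix.reindex e e (Matrix.fromBlocks A₀ Hb C₀ D₀) := by
      ext i j
      obtain ⟨a, rfl⟩ := e.surjective i
      obtain ⟨b, rfl⟩ := e.surjective j
      rcases a with a | a <;> rcases b with b | b <;>
        simp [Matrix.reindex_apply, Matrix.submatrix_apply, hA₀, hD₀, hC₀, hHb]
    have hsplit : M - H =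
        Matrix.reindex e e (Matrix.fromBlocks (A - A₀) 0 0 0)
        + Matrix.reindex e e (Matrix.fromBlocks 0 0 0 (D - D₀))
        + Matrix.reindex e e (Matrix.fromBlocks 0 0 (-C₀) 0) := by
      rw [hM, hHdecomp]
      ext i j
      obtain ⟨a, rfl⟩ := e.surjective i
      obtain ⟨b, rfl⟩ := e.surjective j
      rcases a with a | a <;> rcases b with b | b <;>
        simp [Matrix.reindex_apply, Matrix.submatrix_apply]
    rw [hsplit]
    have h₁ : opNorm (Matrix.reindex e e (Matrix.fromBlocks (A - A₀) 0 0 0)) ≤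
        opNorm (A - A₀) := by
      apply opNorm_embed_le _ _ (fun a => e (Sum.inl a)) (fun a => e (Sum.inl a))
        (fun _ _ h => Sum.inl_injective (e.injective h))
        (fun _ _ h => Sum.inl_injective (e.injective h))
      · intro a b; simp [Matrix.reindex_apply, Matrix.submatrix_apply]
      · intro i j hj
        obtain ⟨b, rfl⟩ := e.surjective j
        rcases b with b | b
        · exact absurd ⟨b, rfl⟩ hj
        · obtain ⟨a, rfl⟩ := e.surjective i
          rcases a with a | a <;>
            simp [Matrix.reindex_apply, Matrix.submatrix_apply]
      · intro i j hi
        obtain ⟨a, rfl⟩ := e.surjective i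
        rcases a with a | a
        · exact absurd ⟨a, rfl⟩ hi
        · obtain ⟨b, rfl⟩ := e.surjective j
          rcases b with b | b <;>
            simp [Matrix.reindex_apply, Matrix.submatrix_apply]
    have h₂ : opNorm (Matrix.reindex e e (Matrix.fromBlocks 0 0 0 (D - D₀))) ≤
        opNorm (D - D₀) := by
      apply opNorm_embed_le _ _ (fun a => e (Sum.inr a)) (fun a => e (Sum.inr a))
        (fun _ _ h => Sum.inr_injective (e.injective h))
        (fun _ _ h => Sum.inr_injective (e.injective h))
      · intro a b; simp [Matrix.reindex_apply, Matrix.submatrix_apply]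
      · intro i j hj
        obtain ⟨b, rfl⟩ := e.surjective j
        rcases b with b | b
        · obtain ⟨a, rfl⟩ := e.surjective i
          rcases a with a | a <;>
            simp [Matrix.reindex_apply, Matrix.submatrix_apply]
        · exact absurd ⟨b, rfl⟩ hj
      · intro i j hi
        obtain ⟨a, rfl⟩ := e.surjective i
        rcases a with a | a
        · obtain ⟨b, rfl⟩ := e.surjective j
          rcases b with b | b <;>
            simp [Matrix.reindex_apply, Matrix.submatrix_apply]
        · exact absurd ⟨a, rfl⟩ hi
    have h₃ : opNorm (Matrix.reindex e e (Matrix.fromBlocks 0 0 (-C₀) 0)) ≤ ε' := by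
      have hr1n : r - 1 < n := by omega
      have h0nr : 0 < n - r := by omega
      have heq : Matrix.reindex e e (Matrix.fromBlocks 0 0 (-C₀) 0) =
          Matrix.of fun i j => if i = e (Sum.inr ⟨0, h0nr⟩) ∧ j = e (Sum.inl ⟨r - 1, by omega⟩)
            then -(H ⟨r, hrlt⟩ ⟨r - 1, hr1n⟩) else 0 := by
        ext i j
        obtain ⟨a, rfl⟩ := e.surjective i
        obtain ⟨b, rfl⟩ := e.surjective j
        rcases a with a | a <;> rcases b with b | b
        · simp [Matrix.reindex_apply, Matrix.submatrix_apply,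
            fun h => Sum.inl_ne_inr (e.injective h)]
        · simp [Matrix.reindex_apply, Matrix.submatrix_apply,
            fun h => Sum.inl_ne_inr (e.injective h)]
        · -- the interesting case
          simp only [Matrix.reindex_apply, Matrix.submatrix_apply, Equiv.symm_apply_apply,
            Matrix.fromBlocks_apply₂₁, Matrix.of_apply, Matrix.neg_apply, hC₀]
          by_cases hab : a = ⟨0, h0nr⟩ ∧ b = ⟨r - 1, by omega⟩
          · obtain ⟨rfl, rfl⟩ := hab
            rw [if_pos ⟨rfl, rfl⟩]
            have h1 : e (Sum.inr ⟨0, h0nr⟩) = (⟨r, hrlt⟩ : Fin n) := by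
              apply Fin.ext; rw [her]; simp
            have h2 : e (Sum.inl ⟨r - 1, by omega⟩) = (⟨r - 1, hr1n⟩ : Fin n) := by
              apply Fin.ext; rw [hel]
            rw [h1, h2]
          · rw [if_neg (by
              intro ⟨h1, h2⟩
              exact hab ⟨Sum.inr_injective (e.injective h1),
                Sum.inl_injective (e.injective h2)⟩)]
            have hz : H (e (Sum.inr a)) (e (Sum.inl b)) = 0 := by
              apply hHess
              rw [her, hel]
              have hb := b.isLt
              have ha := a.isLt
              have : ¬((a : ℕ) = 0 ∧ (b : ℕ) = r - 1) := by
                intro ⟨h1, h2⟩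
                exact hab ⟨Fin.ext h1, Fin.ext h2⟩
              omega
            rw [hz, neg_zero]
        · simp [Matrix.reindex_apply, Matrix.submatrix_apply,
            fun h => Sum.inr_ne_inl (e.injective h)]
      rw [heq]
      refine le_trans (opNorm_single_le _ _ _) ?_
      rwa [norm_neg]
    calc opNorm (Matrix.reindex e e (Matrix.fromBlocks (A - A₀) 0 0 0)
        + Matrix.reindex e e (Matrix.fromBlocks 0 0 0 (D - D₀))
        + Matrix.reindex e e (Matrix.fromBlocks 0 0 (-C₀) 0))
        ≤ opNorm (Matrix.reindex e e (Matrix.fromBlocks (A - A₀) 0 0 0)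
          + Matrix.reindex e e (Matrix.fromBlocks 0 0 0 (D - D₀)))
          + opNorm (Matrix.reindex e e (Matrix.fromBlocks 0 0 (-C₀) 0)) := opNorm_add_le _ _
      _ ≤ opNorm (Matrix.reindex e e (Matrix.fromBlocks (A - A₀) 0 0 0))
          + opNorm (Matrix.reindex e e (Matrix.fromBlocks 0 0 0 (D - D₀)))
          + opNorm (Matrix.reindex e e (Matrix.fromBlocks 0 0 (-C₀) 0)) := by
            have := opNorm_add_le (Matrix.reindex e e (Matrix.fromBlocks (A - A₀) 0 0 0))
              (Matrix.reindex e e (Matrix.fromBlocks 0 0 0 (D - D₀)))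
            linarith
      _ ≤ ε := by linarith
  · have : H + (M - H) = M := by abel
    rw [this, hM, spectrum_reindex]
    exact hz


/-- for an upper Hessenberg matrix `H` whose coupling subdiagonal entry
`H_{r+1,r}` has modulus at most `ε'`, the `(ε-ε')`-pseudospectra of the upper-left `r×r`
and lower-right `(n-r)×(n-r)` corners are contained in `Λ_ε(H)`, for every `ε > ε'`. -/
theorem stmt_15 (n r : ℕ) (hr₁ : 1 ≤ r) (hr₂ : r ≤ n - 1) (hn : 2 ≤ n)
    (H : Matrix (Fin n) (Fin n) ℂ)
    (hHess : ∀ i j : Fin n, (j : ℕ) + 1 < (i : ℕ) → H i j = 0)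
    (ε' : ℝ)
    (hcoupling : ‖H ⟨r, by omega⟩ ⟨r - 1, by omega⟩‖ ≤ ε')
    (Hminus : Matrix (Fin r) (Fin r) ℂ)
    (hHminus : Hminus = H.submatrix
      (fun i : Fin r => (⟨(i : ℕ), by have := i.isLt; omega⟩ : Fin n))
      (fun j : Fin r => (⟨(j : ℕ), by have := j.isLt; omega⟩ : Fin n)))
    (Hplus : Matrix (Fin (n - r)) (Fin (n - r)) ℂ)
    (hHplus : Hplus = H.submatrix
      (fun i : Fin (n - r) => (⟨r + (i : ℕ), by have := i.isLt; omega⟩ : Fin n))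
      (fun j : Fin (n - r) => (⟨r + (j : ℕ), by have := j.isLt; omega⟩ : Fin n)))
    (ε : ℝ) (hε : ε' < ε) :
    pseudospectrum (ε - ε') Hminus ∪ pseudospectrum (ε - ε') Hplus ⊆ pseudospectrum ε H := by
  have hrlt : r < n := by omega
  have hrn : r + (n - r) = n := by omega
  set e : Fin r ⊕ Fin (n - r) ≃ Fin n := finSumFinEquiv.trans (finCongr hrn) with he
  have hel : ∀ a : Fin r, ((e (Sum.inl a)) : ℕ) = a := by intro a; simp [he]
  have her : ∀ b : Fin (n - r), ((e (Sum.inr b)) : ℕ) = r + b := by intro b; simp [he]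
  have hHm : Hminus = H.submatrix (fun a => e (Sum.inl a)) (fun a => e (Sum.inl a)) := by
    rw [hHminus]
    congr 1 <;> funext a <;> exact Fin.ext (hel a).symm
  have hHp : Hplus = H.submatrix (fun a => e (Sum.inr a)) (fun a => e (Sum.inr a)) := by
    rw [hHplus]
    congr 1 <;> funext a <;> exact Fin.ext (her a).symm
  intro z hz
  rcases hz with hz | hz
  · obtain ⟨E, hE, hzE⟩ := hz
    apply stmt15_aux n r hr₁ hrlt H hHess ε' ε hcoupling (Hminus + E) Hplus e he z
    · exact spectrum_fromBlocks_left _ _ _ hzE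
    · have h1 : Hminus + E
          - H.submatrix (fun a => e (Sum.inl a)) (fun a => e (Sum.inl a)) = E := by
        rw [← hHm]; abel
      have h2 : Hplus
          - H.submatrix (fun a => e (Sum.inr a)) (fun a => e (Sum.inr a)) = 0 := by
        rw [← hHp, sub_self]
      rw [h1, h2, opNorm_zero]
      linarith
  · obtain ⟨E, hE, hzE⟩ := hz
    apply stmt15_aux n r hr₁ hrlt H hHess ε' ε hcoupling Hminus (Hplus + E) e he z
    · exact spectrum_fromBlocks_right _ _ _ hzE
    · have h1 : Hminus
          - H.submatrix (fun a => e (Sum.inl a)) (fun a => e (Sum.inl a)) = 0 := by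
        rw [← hHm, sub_self]
      have h2 : Hplus + E
          - H.submatrix (fun a => e (Sum.inr a)) (fun a => e (Sum.inr a)) = E := by
        rw [← hHp]; abel
      rw [h1, h2, opNorm_zero]
      linarith
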